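/- arXiv:2511.00931 — 2 statements merged into one kernel-verified Lean document; each statement's English description precedes it below -/
import Mathlib

section
/- Let f : Ω×ℝ → ℝ be continuous, let g : ℝ → ℝ be continuous satisfying (g₀), and suppose M, N satisfy (h₁) with exponent α ∈ ℝ and (h₂) with exponent β ∈ ℕ ∪ {0}. If v : Ω → ℝ is a viscosity solution of M(x, Dw, D²w) + h(x, w) = 0 in Ω, where h(x, s) = e^{(α+β+1)G(Φ_g⁻¹(s))} f(x, Φ_g⁻¹(s)), then u = Φ_g⁻¹ ∘ v is a viscosity solution of M(x, Dw, D²w) + g(w) N(x, Dw, D²w) + f(x, w) = 0 in Ω. -/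
open Real Filter Set

/-- Gradient of `u` at `x` (vector of partial derivatives). -/
noncomputable def vgrad {n : ℕ} (u : (Fin n → ℝ) → ℝ) (x : Fin n → ℝ) : Fin n → ℝ :=
  fun i => fderiv ℝ u x (Pi.single i 1)

/-- Hessian matrix of `u` at `x`. -/
noncomputable def vhess {n : ℕ} (u : (Fin n → ℝ) → ℝ) (x : Fin n → ℝ) :
    Matrix (Fin n) (Fin n) ℝ :=
  Matrix.of fun i j => fderiv ℝ (fun y => fderiv ℝ u y (Pi.single j 1)) x (Pi.single i 1)

noncomputable def Gg (g : ℝ → ℝ) (s : ℝ) : ℝ := ∫ τ in (0:ℝ)..s, g τ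

noncomputable def Phig (g : ℝ → ℝ) (t : ℝ) : ℝ := ∫ s in (0:ℝ)..t, Real.exp (Gg g s)

/-- Condition `(g₀)`. -/
def g0cond (g : ℝ → ℝ) : Prop :=
  ∃ s₀ : ℝ, 0 ≤ s₀ ∧ (∀ s, s₀ ≤ s → 0 ≤ g s) ∧ (∀ s, s ≤ -s₀ → g s ≤ 0)

/-- Viscosity subsolution of `𝓕(x, w, Dw, D²w) = 0` in `Ω`. -/
def ViscositySubsolution {n : ℕ} (Ω : Set (Fin n → ℝ))
    (F : (Fin n → ℝ) → ℝ → (Fin n → ℝ) → Matrix (Fin n) (Fin n) ℝ → ℝ)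
    (w : (Fin n → ℝ) → ℝ) : Prop :=
  ∀ φ : (Fin n → ℝ) → ℝ, ContDiffOn ℝ 2 φ Ω →
    ∀ x₀ ∈ Ω, IsLocalMaxOn (fun x => w x - φ x) Ω x₀ →
      F x₀ (w x₀) (vgrad φ x₀) (vhess φ x₀) ≤ 0

/-- Viscosity supersolution of `𝓕(x, w, Dw, D²w) = 0` in `Ω`. -/
def ViscositySupersolution {n : ℕ} (Ω : Set (Fin n → ℝ))
    (F : (Fin n → ℝ) → ℝ → (Fin n → ℝ) → Matrix (Fin n) (Fin n) ℝ → ℝ)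
    (w : (Fin n → ℝ) → ℝ) : Prop :=
  ∀ φ : (Fin n → ℝ) → ℝ, ContDiffOn ℝ 2 φ Ω →
    ∀ x₀ ∈ Ω, IsLocalMinOn (fun x => w x - φ x) Ω x₀ →
      0 ≤ F x₀ (w x₀) (vgrad φ x₀) (vhess φ x₀)

/-- Viscosity solution: both a viscosity subsolution and a viscosity supersolution. -/
def ViscositySolution {n : ℕ} (Ω : Set (Fin n → ℝ))
    (F : (Fin n → ℝ) → ℝ → (Fin n → ℝ) → Matrix (Fin n) (Fin n) ℝ → ℝ)
    (w : (Fin n → ℝ) → ℝ) : Prop :=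
  ViscositySubsolution Ω F w ∧ ViscositySupersolution Ω F w

/- ### Auxiliary lemmas -/

lemma gg_hasDerivAt {g : ℝ → ℝ} (hg : Continuous g) (t : ℝ) : HasDerivAt (Gg g) (g t) t :=
  intervalIntegral.integral_hasDerivAt_right (hg.intervalIntegrable _ _)
    (hg.stronglyMeasurableAtFilter _ _) hg.continuousAt

lemma gg_continuous {g : ℝ → ℝ} (hg : Continuous g) : Continuous (Gg g) := by
  have : Differentiable ℝ (Gg g) := fun t => (gg_hasDerivAt hg t).differentiableAt
  exact this.continuous

lemma phig_hasDerivAt {g : ℝ → ℝ} (hg : Continuous g) (t : ℝ) :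
    HasDerivAt (Phig g) (Real.exp (Gg g t)) t := by
  have hc : Continuous fun s => Real.exp (Gg g s) := Real.continuous_exp.comp (gg_continuous hg)
  exact intervalIntegral.integral_hasDerivAt_right (hc.intervalIntegrable _ _)
    (hc.stronglyMeasurableAtFilter _ _) hc.continuousAt

lemma phig_contDiff {g : ℝ → ℝ} (hg : Continuous g) : ContDiff ℝ 2 (Phig g) := by
  have hG : ContDiff ℝ 1 (Gg g) := by
    rw [contDiff_one_iff_deriv]
    refine ⟨fun t => (gg_hasDerivAt hg t).differentiableAt, ?_⟩
    have : deriv (Gg g) = g := funext fun t => (gg_hasDerivAt hg t).deriv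
    rw [this]; exact hg
  have hE : ContDiff ℝ 1 (fun t => Real.exp (Gg g t)) := Real.contDiff_exp.of_le le_top |>.comp hG
  have h2 : (2 : WithTop ℕ∞) = 1 + 1 := by norm_num
  rw [h2, contDiff_succ_iff_deriv]
  refine ⟨fun t => (phig_hasDerivAt hg t).differentiableAt, by simp, ?_⟩
  have : deriv (Phig g) = fun t => Real.exp (Gg g t) :=
    funext fun t => (phig_hasDerivAt hg t).deriv
  rw [this]; exact hE

lemma phig_mono {g : ℝ → ℝ} (hg : Continuous g) : Monotone (Phig g) := by
  refine (strictMono_of_deriv_pos fun t => ?_).monotone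
  rw [(phig_hasDerivAt hg t).deriv]; positivity

lemma snd_deriv_hasFDerivAt {n : ℕ} {φ : (Fin n → ℝ) → ℝ} {x : Fin n → ℝ}
    (hφ : ContDiffAt ℝ 2 φ x) (w : Fin n → ℝ) :
    HasFDerivAt (fun y => fderiv ℝ φ y w)
      ((ContinuousLinearMap.apply ℝ ℝ w).comp (fderiv ℝ (fderiv ℝ φ) x)) x := by
  have hd : DifferentiableAt ℝ (fderiv ℝ φ) x := by
    have h1 : ContDiffAt ℝ 1 (fderiv ℝ φ) x := hφ.fderiv_right le_rfl
    exact h1.differentiableAt one_ne_zero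
  exact ((ContinuousLinearMap.apply ℝ ℝ w).hasFDerivAt).comp x hd.hasFDerivAt

lemma vhess_eq_sndFDeriv {n : ℕ} {φ : (Fin n → ℝ) → ℝ} {x : Fin n → ℝ}
    (hφ : ContDiffAt ℝ 2 φ x) (i j : Fin n) :
    vhess φ x i j = fderiv ℝ (fderiv ℝ φ) x (Pi.single i 1) (Pi.single j 1) := by
  have := (snd_deriv_hasFDerivAt hφ (Pi.single j 1)).fderiv
  simp only [vhess, Matrix.of_apply, this]
  rfl

lemma vhess_isSymm {n : ℕ} {φ : (Fin n → ℝ) → ℝ} {x : Fin n → ℝ}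
    (hφ : ContDiffAt ℝ 2 φ x) : (vhess φ x).IsSymm := by
  have hs := hφ.isSymmSndFDerivAt (by simp [minSmoothness_of_isRCLikeNormedField])
  apply Matrix.IsSymm.ext
  intro i j
  rw [vhess_eq_sndFDeriv hφ, vhess_eq_sndFDeriv hφ]
  exact hs _ _

lemma key_comp {n : ℕ} {Ω : Set (Fin n → ℝ)} (hΩ : IsOpen Ω) {g : ℝ → ℝ} (hg : Continuous g)
    {φ : (Fin n → ℝ) → ℝ} (hφ : ContDiffOn ℝ 2 φ Ω) (c : ℝ) {x₀ : Fin n → ℝ} (hx₀ : x₀ ∈ Ω) :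
    ContDiffOn ℝ 2 (fun y => Phig g (φ y + c)) Ω ∧
    vgrad (fun y => Phig g (φ y + c)) x₀ = Real.exp (Gg g (φ x₀ + c)) • vgrad φ x₀ ∧
    vhess (fun y => Phig g (φ y + c)) x₀ =
      Real.exp (Gg g (φ x₀ + c)) • vhess φ x₀ +
      (Real.exp (Gg g (φ x₀ + c)) * g (φ x₀ + c)) • Matrix.vecMulVec (vgrad φ x₀) (vgrad φ x₀) := by
  have hψ : ContDiffOn ℝ 2 (fun y => Phig g (φ y + c)) Ω :=
    (phig_contDiff hg).comp_contDiffOn (hφ.add contDiffOn_const)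
  have hDψ : ∀ y ∈ Ω, HasFDerivAt (fun z => Phig g (φ z + c))
      (Real.exp (Gg g (φ y + c)) • fderiv ℝ φ y) y := by
    intro y hy
    have hφy : ContDiffAt ℝ 2 φ y := hφ.contDiffAt (hΩ.mem_nhds hy)
    have hdy : DifferentiableAt ℝ φ y := hφy.differentiableAt two_ne_zero
    have hadd : HasFDerivAt (fun z => φ z + c) (fderiv ℝ φ y) y := hdy.hasFDerivAt.add_const c
    exact (phig_hasDerivAt hg (φ y + c)).comp_hasFDerivAt y hadd
  have hφx : ContDiffAt ℝ 2 φ x₀ := hφ.contDiffAt (hΩ.mem_nhds hx₀)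
  refine ⟨hψ, ?_, ?_⟩
  · funext i
    simp only [vgrad, (hDψ x₀ hx₀).fderiv, ContinuousLinearMap.smul_apply, smul_eq_mul,
      Pi.smul_apply]
  · apply Matrix.ext
    intro i j
    have hEq : (fun y => fderiv ℝ (fun z => Phig g (φ z + c)) y (Pi.single j 1))
        =ᶠ[nhds x₀] (fun y => Real.exp (Gg g (φ y + c)) * fderiv ℝ φ y (Pi.single j 1)) := by
      filter_upwards [hΩ.mem_nhds hx₀] with y hy
      rw [(hDψ y hy).fderiv]
      simp
    have hB : HasFDerivAt (fun y => Real.exp (Gg g (φ y + c)))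
        ((Real.exp (Gg g (φ x₀ + c)) * g (φ x₀ + c)) • fderiv ℝ φ x₀) x₀ := by
      have h1 : HasDerivAt (fun t => Real.exp (Gg g t))
          (Real.exp (Gg g (φ x₀ + c)) * g (φ x₀ + c)) (φ x₀ + c) :=
        (gg_hasDerivAt hg _).exp
      have hadd : HasFDerivAt (fun z => φ z + c) (fderiv ℝ φ x₀) x₀ :=
        (hφx.differentiableAt two_ne_zero).hasFDerivAt.add_const c
      exact h1.comp_hasFDerivAt x₀ hadd
    have hC := snd_deriv_hasFDerivAt hφx (Pi.single j 1)
    have hBC : HasFDerivAt (fun y => Real.exp (Gg g (φ y + c)) * fderiv ℝ φ y (Pi.single j 1)) _ x₀ :=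
      hB.mul hC
    show vhess _ x₀ i j = _
    simp only [vhess, Matrix.of_apply]
    rw [hEq.fderiv_eq, hBC.fderiv]
    simp only [ContinuousLinearMap.add_apply, ContinuousLinearMap.smul_apply,
      ContinuousLinearMap.coe_comp', Function.comp_apply, ContinuousLinearMap.apply_apply,
      smul_eq_mul, Matrix.add_apply, Matrix.smul_apply, Matrix.vecMulVec_apply,
      Matrix.of_apply, hC.fderiv, vgrad]
    ring

lemma alg_identity (α K m nn ff gs : ℝ) (β : ℕ) :
    |Real.exp K| ^ α * (Real.exp K ^ (β + 1) * m + Real.exp K * gs * Real.exp K ^ β * nn)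
      + Real.exp ((α + β + 1) * K) * ff
    = Real.exp ((α + β + 1) * K) * (m + gs * nn + ff) := by
  have e1 : Real.exp K ^ (β + 1) = Real.exp ((↑(β + 1) : ℝ) * K) := (Real.exp_nat_mul K (β + 1)).symm
  have e2 : Real.exp K ^ β = Real.exp ((β : ℝ) * K) := (Real.exp_nat_mul K β).symm
  rw [abs_of_pos (Real.exp_pos K), Real.rpow_def_of_pos (Real.exp_pos K) α, Real.log_exp, e1, e2]
  have h1 : Real.exp (K * α) * Real.exp ((↑(β + 1) : ℝ) * K) = Real.exp ((α + β + 1) * K) := by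
    rw [← Real.exp_add]; congr 1; push_cast; ring
  have h2 : Real.exp (K * α) * (Real.exp K * Real.exp ((β : ℝ) * K))
      = Real.exp ((α + β + 1) * K) := by
    rw [← Real.exp_add, ← Real.exp_add]; congr 1; push_cast; ring
  linear_combination m * h1 + gs * nn * h2

/-- Theorem 2, one direction: if v is a viscosity solution of
M(x,Dw,D²w) + h(x,w) = 0 in Ω, then u = Φ_g⁻¹ ∘ v is a viscosity solution of
M(x,Dw,D²w) + g(w)N(x,Dw,D²w) + f(x,w) = 0 in Ω. -/
theorem stmt6 {n : ℕ} (Ω : Set (Fin n → ℝ)) (hΩ : IsOpen Ω)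
    (f : (Fin n → ℝ) → ℝ → ℝ)
    (hf : ContinuousOn (fun q : (Fin n → ℝ) × ℝ => f q.1 q.2) (Ω ×ˢ Set.univ))
    (g : ℝ → ℝ) (hg : Continuous g) (hg0 : g0cond g)
    (M N : (Fin n → ℝ) → (Fin n → ℝ) → Matrix (Fin n) (Fin n) ℝ → ℝ)
    (hM : ContinuousOn
      (fun q : (Fin n → ℝ) × (Fin n → ℝ) × Matrix (Fin n) (Fin n) ℝ => M q.1 q.2.1 q.2.2)
      (Ω ×ˢ Set.univ))
    (α : ℝ) (β : ℕ)
    (h1 : ∀ x ∈ Ω, ∀ lam : ℝ, lam ≠ 0 → ∀ (p : Fin n → ℝ) (X : Matrix (Fin n) (Fin n) ℝ),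
      X.IsSymm → M x (lam • p) X = |lam| ^ α * M x p X)
    (h2 : ∀ x ∈ Ω, ∀ (p : Fin n → ℝ) (X : Matrix (Fin n) (Fin n) ℝ), X.IsSymm →
      ∀ γ : ℝ, γ ≠ 0 → ∀ σ : ℝ,
        M x p (γ • X + σ • Matrix.vecMulVec p p)
          = γ ^ (β + 1) * M x p X + σ * γ ^ β * N x p X)
    (Φinv : ℝ → ℝ) (hleft : ∀ t : ℝ, Φinv (Phig g t) = t)
    (hright : ∀ s : ℝ, Phig g (Φinv s) = s)
    (v : (Fin n → ℝ) → ℝ) (hv : ContinuousOn v Ω)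
    (hsol : ViscositySolution Ω
      (fun x r p X => M x p X
        + Real.exp ((α + (β : ℝ) + 1) * Gg g (Φinv r)) * f x (Φinv r)) v) :
    ViscositySolution Ω
      (fun x r p X => M x p X + g r * N x p X + f x r) (Φinv ∘ v) := by
  constructor
  · intro φ hφ x₀ hx₀ hmax
    set c : ℝ := Φinv (v x₀) - φ x₀ with hc
    obtain ⟨hψC, hgrad, hhess⟩ := key_comp hΩ hg hφ c hx₀
    have hsc : φ x₀ + c = Φinv (v x₀) := by rw [hc]; ring
    rw [hsc] at hgrad hhess
    -- the translated test function for v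
    have hmax' : IsLocalMaxOn (fun x => v x - Phig g (φ x + c)) Ω x₀ := by
      have h0 : Phig g (φ x₀ + c) = v x₀ := by rw [hsc, hright]
      have hmax2 : ∀ᶠ y in nhdsWithin x₀ Ω,
          Φinv (v y) - φ y ≤ Φinv (v x₀) - φ x₀ := hmax
      filter_upwards [hmax2] with y hy
      have h1' : Φinv (v y) ≤ φ y + c := by rw [hc]; linarith
      have h2' : v y ≤ Phig g (φ y + c) := by
        calc v y = Phig g (Φinv (v y)) := (hright _).symm
        _ ≤ Phig g (φ y + c) := phig_mono hg h1'
      simp only [h0]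
      linarith
    have hsub := hsol.1 (fun y => Phig g (φ y + c)) hψC x₀ hx₀ hmax'
    simp only [] at hsub
    have hφx : ContDiffAt ℝ 2 φ x₀ := hφ.contDiffAt (hΩ.mem_nhds hx₀)
    have hψx : ContDiffAt ℝ 2 (fun y => Phig g (φ y + c)) x₀ :=
      hψC.contDiffAt (hΩ.mem_nhds hx₀)
    have hXsym := vhess_isSymm hφx
    have hψsym : (Real.exp (Gg g (Φinv (v x₀))) • vhess φ x₀ +
        (Real.exp (Gg g (Φinv (v x₀))) * g (Φinv (v x₀))) •
          Matrix.vecMulVec (vgrad φ x₀) (vgrad φ x₀)).IsSymm := hhess ▸ vhess_isSymm hψx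
    have hlam : Real.exp (Gg g (Φinv (v x₀))) ≠ 0 := (Real.exp_pos _).ne'
    rw [hgrad, hhess, h1 x₀ hx₀ _ hlam _ _ hψsym, h2 x₀ hx₀ _ _ hXsym _ hlam _,
      alg_identity] at hsub
    show M x₀ (vgrad φ x₀) (vhess φ x₀)
      + g (Φinv (v x₀)) * N x₀ (vgrad φ x₀) (vhess φ x₀) + f x₀ (Φinv (v x₀)) ≤ 0
    nlinarith [Real.exp_pos ((α + (β : ℝ) + 1) * Gg g (Φinv (v x₀))), hsub]
  · intro φ hφ x₀ hx₀ hmin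
    set c : ℝ := Φinv (v x₀) - φ x₀ with hc
    obtain ⟨hψC, hgrad, hhess⟩ := key_comp hΩ hg hφ c hx₀
    have hsc : φ x₀ + c = Φinv (v x₀) := by rw [hc]; ring
    rw [hsc] at hgrad hhess
    have hmin' : IsLocalMinOn (fun x => v x - Phig g (φ x + c)) Ω x₀ := by
      have h0 : Phig g (φ x₀ + c) = v x₀ := by rw [hsc, hright]
      have hmin2 : ∀ᶠ y in nhdsWithin x₀ Ω,
          Φinv (v x₀) - φ x₀ ≤ Φinv (v y) - φ y := hmin
      filter_upwards [hmin2] with y hy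
      have h1' : φ y + c ≤ Φinv (v y) := by rw [hc]; linarith
      have h2' : Phig g (φ y + c) ≤ v y := by
        calc Phig g (φ y + c) ≤ Phig g (Φinv (v y)) := phig_mono hg h1'
        _ = v y := hright _
      simp only [h0]
      linarith
    have hsup := hsol.2 (fun y => Phig g (φ y + c)) hψC x₀ hx₀ hmin'
    simp only [] at hsup
    have hφx : ContDiffAt ℝ 2 φ x₀ := hφ.contDiffAt (hΩ.mem_nhds hx₀)
    have hψx : ContDiffAt ℝ 2 (fun y => Phig g (φ y + c)) x₀ :=
      hψC.contDiffAt (hΩ.mem_nhds hx₀)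
    have hXsym := vhess_isSymm hφx
    have hψsym : (Real.exp (Gg g (Φinv (v x₀))) • vhess φ x₀ +
        (Real.exp (Gg g (Φinv (v x₀))) * g (Φinv (v x₀))) •
          Matrix.vecMulVec (vgrad φ x₀) (vgrad φ x₀)).IsSymm := hhess ▸ vhess_isSymm hψx
    have hlam : Real.exp (Gg g (Φinv (v x₀))) ≠ 0 := (Real.exp_pos _).ne'
    rw [hgrad, hhess, h1 x₀ hx₀ _ hlam _ _ hψsym, h2 x₀ hx₀ _ _ hXsym _ hlam _,
      alg_identity] at hsup
    show 0 ≤ M x₀ (vgrad φ x₀) (vhess φ x₀)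
      + g (Φinv (v x₀)) * N x₀ (vgrad φ x₀) (vhess φ x₀) + f x₀ (Φinv (v x₀))
    nlinarith [Real.exp_pos ((α + (β : ℝ) + 1) * Gg g (Φinv (v x₀))), hsup]
end

section
/- Let Ω ⊆ ℝⁿ be open, f : Ω×ℝ → ℝ continuous, and g : ℝ → ℝ continuous satisfying (g₀). Set h(x, s) = e^{3G(Φ_g⁻¹(s))} f(x, Φ_g⁻¹(s)). Then a continuous function u : Ω → ℝ is a viscosity solution of Δ_∞w + g(w)|Dw|⁴ + f(x, w) = 0 in Ω if and only if v = Φ_g ∘ u is a viscosity solution of Δ_∞w + h(x, w) = 0 in Ω. -/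
open Real Filter Set

/-- Infinity-Laplacian `Δ_∞ u = ⟨D²u Du, Du⟩`. -/
noncomputable def infLap {n : ℕ} (u : (Fin n → ℝ) → ℝ) (x : Fin n → ℝ) : ℝ :=
  dotProduct (Matrix.mulVec (vhess u x) (vgrad u x)) (vgrad u x)

/-- Squared Euclidean norm `|p|²` of a vector. -/
noncomputable def normSq {n : ℕ} (p : Fin n → ℝ) : ℝ := ∑ i, p i ^ 2
/-! ### Auxiliary lemmas -/

lemma Gg_hasDerivAt (g : ℝ → ℝ) (hg : Continuous g) (s : ℝ) :
    HasDerivAt (Gg g) (g s) s :=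
  intervalIntegral.integral_hasDerivAt_right (hg.intervalIntegrable _ _)
    (hg.stronglyMeasurableAtFilter _ _) hg.continuousAt

lemma Gg_contDiff (g : ℝ → ℝ) (hg : Continuous g) : ContDiff ℝ 1 (Gg g) := by
  rw [contDiff_one_iff_deriv]
  have hd : ∀ s, HasDerivAt (Gg g) (g s) s := Gg_hasDerivAt g hg
  refine ⟨fun s => (hd s).differentiableAt, ?_⟩
  have : deriv (Gg g) = g := funext fun s => (hd s).deriv
  rw [this]; exact hg

lemma Phig_hasDerivAt (g : ℝ → ℝ) (hg : Continuous g) (t : ℝ) :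
    HasDerivAt (Phig g) (Real.exp (Gg g t)) t := by
  have hc : Continuous fun s => Real.exp (Gg g s) :=
    Real.continuous_exp.comp (Gg_contDiff g hg).continuous
  exact intervalIntegral.integral_hasDerivAt_right (hc.intervalIntegrable _ _)
    (hc.stronglyMeasurableAtFilter _ _) hc.continuousAt

lemma Phig_contDiff (g : ℝ → ℝ) (hg : Continuous g) : ContDiff ℝ 2 (Phig g) := by
  have hd := Phig_hasDerivAt g hg
  have h2 : (2 : WithTop ℕ∞) = 1 + 1 := by norm_num
  rw [h2, contDiff_succ_iff_deriv]
  refine ⟨fun t => (hd t).differentiableAt, by simp, ?_⟩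
  have : deriv (Phig g) = fun t => Real.exp (Gg g t) := funext fun t => (hd t).deriv
  rw [this]
  exact Real.contDiff_exp.comp (Gg_contDiff g hg)

lemma Phig_strictMono (g : ℝ → ℝ) (hg : Continuous g) : StrictMono (Phig g) :=
  strictMono_of_deriv_pos (fun t => by
    rw [(Phig_hasDerivAt g hg t).deriv]; exact Real.exp_pos _)

section Inv
variable (g : ℝ → ℝ) (hg : Continuous g) (Φinv : ℝ → ℝ)
  (hleft : ∀ t : ℝ, Φinv (Phig g t) = t) (hright : ∀ s : ℝ, Phig g (Φinv s) = s)

include hg hright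

lemma Phinv_strictMono : StrictMono Φinv := by
  intro s t hst
  by_contra h
  push_neg at h
  have : Phig g (Φinv t) ≤ Phig g (Φinv s) := (Phig_strictMono g hg).monotone h
  rw [hright, hright] at this; exact absurd hst (not_lt.mpr this)

include hleft

lemma Phinv_continuous : Continuous Φinv := by
  have hsurj : Function.Surjective Φinv := fun t => ⟨Phig g t, hleft t⟩
  exact (StrictMono.orderIsoOfSurjective Φinv (Phinv_strictMono g hg Φinv hright)
    hsurj).continuous

lemma Phinv_hasDerivAt (s : ℝ) :
    HasDerivAt Φinv (Real.exp (Gg g (Φinv s)))⁻¹ s :=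
  HasDerivAt.of_local_left_inverse ((Phinv_continuous g hg Φinv hleft hright).continuousAt)
    (Phig_hasDerivAt g hg (Φinv s)) (Real.exp_ne_zero _)
    (Filter.Eventually.of_forall hright)

lemma Phinv_contDiff : ContDiff ℝ 2 Φinv := by
  have hd := Phinv_hasDerivAt g hg Φinv hleft hright
  have hderiv : deriv Φinv = fun s => (Real.exp (Gg g (Φinv s)))⁻¹ :=
    funext fun s => (hd s).deriv
  have hc1 : ContDiff ℝ 1 Φinv := by
    rw [contDiff_one_iff_deriv]
    refine ⟨fun s => (hd s).differentiableAt, ?_⟩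
    rw [hderiv]
    exact (Real.continuous_exp.comp ((Gg_contDiff g hg).continuous.comp
      (Phinv_continuous g hg Φinv hleft hright))).inv₀ fun s => Real.exp_ne_zero _
  have h2 : (2 : WithTop ℕ∞) = 1 + 1 := by norm_num
  rw [h2, contDiff_succ_iff_deriv]
  refine ⟨fun s => (hd s).differentiableAt, by simp, ?_⟩
  rw [hderiv]
  exact (Real.contDiff_exp.comp ((Gg_contDiff g hg).comp hc1)).inv fun s => Real.exp_ne_zero _

lemma Phinv_deriv2 (s : ℝ) :
    deriv (deriv Φinv) s = -(g (Φinv s)) * ((Real.exp (Gg g (Φinv s)))⁻¹)^2 := by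
  have hd := Phinv_hasDerivAt g hg Φinv hleft hright
  have hderiv : deriv Φinv = fun s => (Real.exp (Gg g (Φinv s)))⁻¹ :=
    funext fun s => (hd s).deriv
  rw [hderiv]
  have h1 : HasDerivAt (fun s => Gg g (Φinv s))
      (g (Φinv s) * (Real.exp (Gg g (Φinv s)))⁻¹) s :=
    (Gg_hasDerivAt g hg (Φinv s)).comp s (hd s)
  have h2 : HasDerivAt (fun s => Real.exp (Gg g (Φinv s)))
      (Real.exp (Gg g (Φinv s)) * (g (Φinv s) * (Real.exp (Gg g (Φinv s)))⁻¹)) s := h1.exp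
  have h3 := h2.inv (Real.exp_ne_zero _)
  rw [show (fun s => (Real.exp (Gg g (Φinv s)))⁻¹) = (fun s => Real.exp (Gg g (Φinv s)))⁻¹ from rfl, h3.deriv]
  have hne : Real.exp (Gg g (Φinv s)) ≠ 0 := Real.exp_ne_zero _
  field_simp

end Inv

lemma dot_expand {n : ℕ} (H : Matrix (Fin n) (Fin n) ℝ) (q : Fin n → ℝ) (a b : ℝ) :
    dotProduct
      (Matrix.mulVec (Matrix.of fun i j => b * q i * q j + a * H i j) (fun i => a * q i))
      (fun i => a * q i)
    = a^2 * b * (∑ i, q i ^ 2)^2 + a^3 * dotProduct (Matrix.mulVec H q) q := by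
  simp only [dotProduct, Matrix.mulVec, Matrix.of_apply]
  have row : ∀ i : Fin n,
      (∑ j, (b * q i * q j + a * H i j) * (a * q j)) * (a * q i)
      = a^2 * b * (∑ j, q j ^ 2) * q i ^ 2 + a^3 * ((∑ j, H i j * q j) * q i) := by
    intro i
    rw [Finset.sum_mul]
    have : ∀ j : Fin n, (b * q i * q j + a * H i j) * (a * q j) * (a * q i)
        = a^2 * b * (q j ^ 2) * q i ^ 2 + a^3 * (H i j * q j * q i) := fun j => by ring
    rw [Finset.sum_congr rfl fun j _ => this j, Finset.sum_add_distrib]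
    congr 1
    · rw [← Finset.sum_mul, ← Finset.mul_sum]
    · rw [← Finset.mul_sum, Finset.sum_mul]
  rw [Finset.sum_congr rfl fun i _ => row i, Finset.sum_add_distrib]
  congr 1
  · rw [← Finset.mul_sum, sq (∑ i, q i ^ 2), mul_assoc]
  · rw [← Finset.mul_sum]

lemma fderiv_apply_real (χ : ℝ → ℝ) (t r : ℝ) : fderiv ℝ χ t r = r * deriv χ t := by
  calc fderiv ℝ χ t r = fderiv ℝ χ t (r • (1:ℝ)) := by norm_num
  _ = r * deriv χ t := by rw [map_smul, smul_eq_mul, fderiv_apply_one_eq_deriv]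

section Chain
variable {n : ℕ} {Ω : Set (Fin n → ℝ)} (hΩ : IsOpen Ω)
  {ψ : (Fin n → ℝ) → ℝ} (hψ : ContDiffOn ℝ 2 ψ Ω)
  {χ : ℝ → ℝ} (hχ : ContDiff ℝ 2 χ)

include hΩ hψ hχ

lemma fderiv_comp_single {y : Fin n → ℝ} (hy : y ∈ Ω) (j : Fin n) :
    fderiv ℝ (χ ∘ ψ) y (Pi.single j 1) = deriv χ (ψ y) * fderiv ℝ ψ y (Pi.single j 1) := by
  have hψy : DifferentiableAt ℝ ψ y :=
    (hψ.contDiffAt (hΩ.mem_nhds hy)).differentiableAt (by norm_num)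
  have hχy : DifferentiableAt ℝ χ (ψ y) :=
    (hχ.differentiable (by norm_num)).differentiableAt
  rw [fderiv_comp y hχy hψy, ContinuousLinearMap.comp_apply, fderiv_apply_real, mul_comm]

lemma chain_vgrad {x : Fin n → ℝ} (hx : x ∈ Ω) :
    vgrad (χ ∘ ψ) x = fun i => deriv χ (ψ x) * vgrad ψ x i :=
  funext fun i => fderiv_comp_single hΩ hψ hχ hx i

lemma chain_vhess {x : Fin n → ℝ} (hx : x ∈ Ω) (i j : Fin n) :
    vhess (χ ∘ ψ) x i j = deriv (deriv χ) (ψ x) * vgrad ψ x i * vgrad ψ x j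
      + deriv χ (ψ x) * vhess ψ x i j := by
  have hψx : DifferentiableAt ℝ ψ x :=
    (hψ.contDiffAt (hΩ.mem_nhds hx)).differentiableAt (by norm_num)
  have hχ1 : ContDiff ℝ 1 (deriv χ) := by
    have h2 : (2 : WithTop ℕ∞) = 1 + 1 := by norm_num
    rw [h2, contDiff_succ_iff_deriv] at hχ
    exact hχ.2.2
  have hev : (fun y => fderiv ℝ (χ ∘ ψ) y (Pi.single j 1)) =ᶠ[nhds x]
      (fun y => deriv χ (ψ y) * fderiv ℝ ψ y (Pi.single j 1)) := by
    filter_upwards [hΩ.mem_nhds hx] with y hy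
    exact fderiv_comp_single hΩ hψ hχ hy j
  have hA : DifferentiableAt ℝ (fun y => deriv χ (ψ y)) x :=
    ((hχ1.differentiable (by norm_num)).differentiableAt).comp x hψx
  have hB : DifferentiableAt ℝ (fun y => fderiv ℝ ψ y (Pi.single j 1)) x := by
    have hfd : ContDiffAt ℝ 1 (fderiv ℝ ψ) x :=
      (hψ.contDiffAt (hΩ.mem_nhds hx)).fderiv_right (by norm_num)
    exact ((ContinuousLinearMap.apply ℝ ℝ (Pi.single j 1)).differentiable.differentiableAt).comp
      x (hfd.differentiableAt (by norm_num))
  have h1 : vhess (χ ∘ ψ) x i j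
      = fderiv ℝ (fun y => deriv χ (ψ y) * fderiv ℝ ψ y (Pi.single j 1)) x (Pi.single i 1) := by
    show fderiv ℝ (fun y => fderiv ℝ (χ ∘ ψ) y (Pi.single j 1)) x (Pi.single i 1) = _
    rw [hev.fderiv_eq]
  rw [h1, fderiv_fun_mul hA hB]
  have hAd : fderiv ℝ (fun y => deriv χ (ψ y)) x (Pi.single i 1)
      = deriv (deriv χ) (ψ x) * fderiv ℝ ψ x (Pi.single i 1) := by
    have : (fun y => deriv χ (ψ y)) = (deriv χ) ∘ ψ := rfl
    rw [this, fderiv_comp x ((hχ1.differentiable (by norm_num)).differentiableAt) hψx,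
      ContinuousLinearMap.comp_apply, fderiv_apply_real, mul_comm]
  have hBd : fderiv ℝ (fun y => fderiv ℝ ψ y (Pi.single j 1)) x (Pi.single i 1)
      = vhess ψ x i j := rfl
  simp only [ContinuousLinearMap.add_apply, ContinuousLinearMap.coe_smul', Pi.smul_apply,
    smul_eq_mul, hAd, hBd]
  unfold vgrad
  ring

lemma transform_dot {x : Fin n → ℝ} (hx : x ∈ Ω) :
    dotProduct (Matrix.mulVec (vhess (χ ∘ ψ) x) (vgrad (χ ∘ ψ) x)) (vgrad (χ ∘ ψ) x)
    = (deriv χ (ψ x))^2 * deriv (deriv χ) (ψ x) * (normSq (vgrad ψ x))^2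
      + (deriv χ (ψ x))^3
        * dotProduct (Matrix.mulVec (vhess ψ x) (vgrad ψ x)) (vgrad ψ x) := by
  have hH : vhess (χ ∘ ψ) x = Matrix.of (fun i j =>
      deriv (deriv χ) (ψ x) * vgrad ψ x i * vgrad ψ x j + deriv χ (ψ x) * vhess ψ x i j) := by
    ext i j
    exact chain_vhess hΩ hψ hχ hx i j
  rw [hH, chain_vgrad hΩ hψ hχ hx]
  unfold normSq
  exact dot_expand _ _ _ _

lemma transform_normSq {x : Fin n → ℝ} (hx : x ∈ Ω) :
    normSq (vgrad (χ ∘ ψ) x) = (deriv χ (ψ x))^2 * normSq (vgrad ψ x) := by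
  rw [chain_vgrad hΩ hψ hχ hx]
  unfold normSq
  simp only [mul_pow]
  rw [← Finset.mul_sum]

end Chain

lemma vgrad_add_const {n : ℕ} (ψ : (Fin n → ℝ) → ℝ) (c : ℝ) (x : Fin n → ℝ) :
    vgrad (fun y => ψ y + c) x = vgrad ψ x := by
  funext i
  simp only [vgrad, fderiv_add_const]

lemma vhess_add_const {n : ℕ} (ψ : (Fin n → ℝ) → ℝ) (c : ℝ) (x : Fin n → ℝ) :
    vhess (fun y => ψ y + c) x = vhess ψ x := by
  have h : (fun y => fderiv ℝ (fun z => ψ z + c) y) = fun y => fderiv ℝ ψ y :=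
    funext fun y => fderiv_add_const c
  ext i j
  show fderiv ℝ (fun y => fderiv ℝ (fun z => ψ z + c) y (Pi.single j 1)) x (Pi.single i 1) = _
  simp only [fderiv_add_const]
  rfl

lemma exp_three_mul (t : ℝ) : Real.exp (3 * t) = (Real.exp t)^3 := by
  rw [show (3:ℝ) * t = t + t + t by ring, Real.exp_add, Real.exp_add]; ring

lemma sign_helper1 (E Q I F0 gu : ℝ) (hE : 0 < E)
    (h : (E⁻¹)^2 * (-gu * (E⁻¹)^2) * Q^2 + (E⁻¹)^3 * I + gu * ((E⁻¹)^2 * Q)^2 + F0 ≤ 0) :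
    I + E^3 * F0 ≤ 0 := by
  have hne : E ≠ 0 := ne_of_gt hE
  have heq : E^3 * ((E⁻¹)^2 * (-gu * (E⁻¹)^2) * Q^2 + (E⁻¹)^3 * I + gu * ((E⁻¹)^2 * Q)^2 + F0)
      = I + E^3 * F0 := by
    field_simp
    ring
  have h2 : E^3 * ((E⁻¹)^2 * (-gu * (E⁻¹)^2) * Q^2 + (E⁻¹)^3 * I + gu * ((E⁻¹)^2 * Q)^2 + F0)
      ≤ E^3 * 0 := mul_le_mul_of_nonneg_left h (le_of_lt (pow_pos hE 3))
  rw [heq, mul_zero] at h2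
  exact h2

lemma sign_helper2 (E Q I F0 gu : ℝ) (hE : 0 < E)
    (h : E^2 * (E * gu) * Q^2 + E^3 * I + E^3 * F0 ≤ 0) :
    I + gu * Q^2 + F0 ≤ 0 := by
  have h' : E^3 * (I + gu * Q^2 + F0) ≤ E^3 * 0 := by
    rw [mul_zero]
    calc E^3 * (I + gu * Q^2 + F0) = E^2 * (E * gu) * Q^2 + E^3 * I + E^3 * F0 := by ring
    _ ≤ 0 := h
  exact le_of_mul_le_mul_left h' (pow_pos hE 3)

lemma sign_helper1' (E Q I F0 gu : ℝ) (hE : 0 < E)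
    (h : 0 ≤ (E⁻¹)^2 * (-gu * (E⁻¹)^2) * Q^2 + (E⁻¹)^3 * I + gu * ((E⁻¹)^2 * Q)^2 + F0) :
    0 ≤ I + E^3 * F0 := by
  have hne : E ≠ 0 := ne_of_gt hE
  have heq : E^3 * ((E⁻¹)^2 * (-gu * (E⁻¹)^2) * Q^2 + (E⁻¹)^3 * I + gu * ((E⁻¹)^2 * Q)^2 + F0)
      = I + E^3 * F0 := by
    field_simp
    ring
  have h2 : E^3 * 0 ≤ E^3 * ((E⁻¹)^2 * (-gu * (E⁻¹)^2) * Q^2 + (E⁻¹)^3 * I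
      + gu * ((E⁻¹)^2 * Q)^2 + F0) := mul_le_mul_of_nonneg_left h (le_of_lt (pow_pos hE 3))
  rw [heq, mul_zero] at h2
  exact h2

lemma sign_helper2' (E Q I F0 gu : ℝ) (hE : 0 < E)
    (h : 0 ≤ E^2 * (E * gu) * Q^2 + E^3 * I + E^3 * F0) :
    0 ≤ I + gu * Q^2 + F0 := by
  have h' : E^3 * 0 ≤ E^3 * (I + gu * Q^2 + F0) := by
    rw [mul_zero]
    calc (0:ℝ) ≤ E^2 * (E * gu) * Q^2 + E^3 * I + E^3 * F0 := h
    _ = E^3 * (I + gu * Q^2 + F0) := by ring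
  exact le_of_mul_le_mul_left h' (pow_pos hE 3)

/-- a continuous u is a viscosity solution of Δ_∞w + g(w)|Dw|⁴ + f(x,w) = 0 in Ω
iff v = Φ_g ∘ u is a viscosity solution of Δ_∞w + h(x,w) = 0 in Ω,
with h(x,s) = e^{3G(Φ_g⁻¹(s))} f(x, Φ_g⁻¹(s)). -/
theorem stmt10 {n : ℕ} (Ω : Set (Fin n → ℝ)) (hΩ : IsOpen Ω)
    (f : (Fin n → ℝ) → ℝ → ℝ)
    (hf : ContinuousOn (fun q : (Fin n → ℝ) × ℝ => f q.1 q.2) (Ω ×ˢ Set.univ))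
    (g : ℝ → ℝ) (hg : Continuous g) (hg0 : g0cond g)
    (Φinv : ℝ → ℝ) (hleft : ∀ t : ℝ, Φinv (Phig g t) = t)
    (hright : ∀ s : ℝ, Phig g (Φinv s) = s)
    (u : (Fin n → ℝ) → ℝ) (hu : ContinuousOn u Ω) :
    ViscositySolution Ω
      (fun x r p X => dotProduct (Matrix.mulVec X p) p
        + g r * (normSq p) ^ 2 + f x r) u ↔
    ViscositySolution Ω
      (fun x r p X => dotProduct (Matrix.mulVec X p) p
        + Real.exp (3 * Gg g (Φinv r)) * f x (Φinv r)) (Phig g ∘ u) := by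
  have hΦ2 := Phig_contDiff g hg
  have hΦinv2 := Phinv_contDiff g hg Φinv hleft hright
  have hmono := (Phig_strictMono g hg).monotone
  have hinvmono := (Phinv_strictMono g hg Φinv hright).monotone
  have hdI : ∀ s, deriv Φinv s = (Real.exp (Gg g (Φinv s)))⁻¹ :=
    fun s => (Phinv_hasDerivAt g hg Φinv hleft hright s).deriv
  have hdI2 := Phinv_deriv2 g hg Φinv hleft hright
  have hdP : ∀ t, deriv (Phig g) t = Real.exp (Gg g t) :=
    fun t => (Phig_hasDerivAt g hg t).deriv
  have hdP2 : ∀ t, deriv (deriv (Phig g)) t = Real.exp (Gg g t) * g t := by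
    intro t
    have h0 : deriv (Phig g) = fun t => Real.exp (Gg g t) := funext hdP
    rw [h0, ((Gg_hasDerivAt g hg t).exp).deriv]
  constructor
  · rintro ⟨hsub, hsup⟩
    constructor
    · intro ψ hψ x₀ hx₀ hmax
      have hψt : ContDiffOn ℝ 2 (fun x => ψ x + (Phig g (u x₀) - ψ x₀)) Ω :=
        hψ.add contDiffOn_const
      have hφc : ContDiffOn ℝ 2 (Φinv ∘ fun x => ψ x + (Phig g (u x₀) - ψ x₀)) Ω :=
        hΦinv2.comp_contDiffOn hψt
      have hmax' : IsLocalMaxOn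
          (fun x => u x - (Φinv ∘ fun x => ψ x + (Phig g (u x₀) - ψ x₀)) x) Ω x₀ := by
        have hm : ∀ᶠ x in nhdsWithin x₀ Ω,
            ((Phig g ∘ u) x - ψ x) ≤ ((Phig g ∘ u) x₀ - ψ x₀) := hmax
        show ∀ᶠ x in nhdsWithin x₀ Ω, _ ≤ _
        filter_upwards [hm] with x hx
        simp only [Function.comp_apply] at hx ⊢
        have h1 : Phig g (u x) ≤ ψ x + (Phig g (u x₀) - ψ x₀) := by linarith
        have h2 : u x ≤ Φinv (ψ x + (Phig g (u x₀) - ψ x₀)) := by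
          have := hinvmono h1; rwa [hleft] at this
        have h3 : Φinv (ψ x₀ + (Phig g (u x₀) - ψ x₀)) = u x₀ := by
          rw [show ψ x₀ + (Phig g (u x₀) - ψ x₀) = Phig g (u x₀) by ring, hleft]
        rw [h3]
        linarith
      have key := hsub _ hφc x₀ hx₀ hmax'
      try simp only at key
      rw [transform_dot hΩ hψt hΦinv2 hx₀, transform_normSq hΩ hψt hΦinv2 hx₀] at key
      try simp only at key
      rw [vgrad_add_const, vhess_add_const,
        show ψ x₀ + (Phig g (u x₀) - ψ x₀) = Phig g (u x₀) by ring,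
        hdI, hdI2, hleft] at key
      simp only [Function.comp_apply, hleft]
      rw [exp_three_mul]
      exact sign_helper1 _ _ _ _ _ (Real.exp_pos _) key
    · intro ψ hψ x₀ hx₀ hmin
      have hψt : ContDiffOn ℝ 2 (fun x => ψ x + (Phig g (u x₀) - ψ x₀)) Ω :=
        hψ.add contDiffOn_const
      have hφc : ContDiffOn ℝ 2 (Φinv ∘ fun x => ψ x + (Phig g (u x₀) - ψ x₀)) Ω :=
        hΦinv2.comp_contDiffOn hψt
      have hmin' : IsLocalMinOn
          (fun x => u x - (Φinv ∘ fun x => ψ x + (Phig g (u x₀) - ψ x₀)) x) Ω x₀ := by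
        have hm : ∀ᶠ x in nhdsWithin x₀ Ω,
            ((Phig g ∘ u) x₀ - ψ x₀) ≤ ((Phig g ∘ u) x - ψ x) := hmin
        show ∀ᶠ x in nhdsWithin x₀ Ω, _ ≤ _
        filter_upwards [hm] with x hx
        simp only [Function.comp_apply] at hx ⊢
        have h1 : ψ x + (Phig g (u x₀) - ψ x₀) ≤ Phig g (u x) := by linarith
        have h2 : Φinv (ψ x + (Phig g (u x₀) - ψ x₀)) ≤ u x := by
          have := hinvmono h1; rwa [hleft] at this
        have h3 : Φinv (ψ x₀ + (Phig g (u x₀) - ψ x₀)) = u x₀ := by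
          rw [show ψ x₀ + (Phig g (u x₀) - ψ x₀) = Phig g (u x₀) by ring, hleft]
        rw [h3]
        linarith
      have key := hsup _ hφc x₀ hx₀ hmin'
      try simp only at key
      rw [transform_dot hΩ hψt hΦinv2 hx₀, transform_normSq hΩ hψt hΦinv2 hx₀] at key
      try simp only at key
      rw [vgrad_add_const, vhess_add_const,
        show ψ x₀ + (Phig g (u x₀) - ψ x₀) = Phig g (u x₀) by ring,
        hdI, hdI2, hleft] at key
      simp only [Function.comp_apply, hleft]
      rw [exp_three_mul]
      exact sign_helper1' _ _ _ _ _ (Real.exp_pos _) key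
  · rintro ⟨hsub, hsup⟩
    constructor
    · intro φ hφ x₀ hx₀ hmax
      have hφt : ContDiffOn ℝ 2 (fun x => φ x + (u x₀ - φ x₀)) Ω :=
        hφ.add contDiffOn_const
      have hψc : ContDiffOn ℝ 2 (Phig g ∘ fun x => φ x + (u x₀ - φ x₀)) Ω :=
        hΦ2.comp_contDiffOn hφt
      have hmax' : IsLocalMaxOn
          (fun x => (Phig g ∘ u) x - (Phig g ∘ fun x => φ x + (u x₀ - φ x₀)) x) Ω x₀ := by
        have hm : ∀ᶠ x in nhdsWithin x₀ Ω,
            (u x - φ x) ≤ (u x₀ - φ x₀) := hmax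
        show ∀ᶠ x in nhdsWithin x₀ Ω, _ ≤ _
        filter_upwards [hm] with x hx
        simp only [Function.comp_apply]
        have h1 : u x ≤ φ x + (u x₀ - φ x₀) := by linarith
        have h2 : Phig g (u x) ≤ Phig g (φ x + (u x₀ - φ x₀)) := hmono h1
        rw [show φ x₀ + (u x₀ - φ x₀) = u x₀ by ring]
        linarith
      have key := hsub _ hψc x₀ hx₀ hmax'
      try simp only at key
      rw [transform_dot hΩ hφt hΦ2 hx₀] at key
      try simp only at key
      rw [vgrad_add_const, vhess_add_const,
        show φ x₀ + (u x₀ - φ x₀) = u x₀ by ring,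
        hdP, hdP2] at key
      simp only [Function.comp_apply, hleft] at key
      rw [exp_three_mul] at key
      try simp only
      exact sign_helper2 _ _ _ _ _ (Real.exp_pos _) key
    · intro φ hφ x₀ hx₀ hmin
      have hφt : ContDiffOn ℝ 2 (fun x => φ x + (u x₀ - φ x₀)) Ω :=
        hφ.add contDiffOn_const
      have hψc : ContDiffOn ℝ 2 (Phig g ∘ fun x => φ x + (u x₀ - φ x₀)) Ω :=
        hΦ2.comp_contDiffOn hφt
      have hmin' : IsLocalMinOn
          (fun x => (Phig g ∘ u) x - (Phig g ∘ fun x => φ x + (u x₀ - φ x₀)) x) Ω x₀ := by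
        have hm : ∀ᶠ x in nhdsWithin x₀ Ω,
            (u x₀ - φ x₀) ≤ (u x - φ x) := hmin
        show ∀ᶠ x in nhdsWithin x₀ Ω, _ ≤ _
        filter_upwards [hm] with x hx
        simp only [Function.comp_apply]
        have h1 : φ x + (u x₀ - φ x₀) ≤ u x := by linarith
        have h2 : Phig g (φ x + (u x₀ - φ x₀)) ≤ Phig g (u x) := hmono h1
        rw [show φ x₀ + (u x₀ - φ x₀) = u x₀ by ring]
        linarith
      have key := hsup _ hψc x₀ hx₀ hmin'
      try simp only at key
      rw [transform_dot hΩ hφt hΦ2 hx₀] at key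
      try simp only at key
      rw [vgrad_add_const, vhess_add_const,
        show φ x₀ + (u x₀ - φ x₀) = u x₀ by ring,
        hdP, hdP2] at key
      simp only [Function.comp_apply, hleft] at key
      rw [exp_three_mul] at key
      try simp only
      exact sign_helper2' _ _ _ _ _ (Real.exp_pos _) key
end
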